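/- Let p be an odd prime. The map sending a point (x:y:z) of the projective conic C_p: x² + y² + z² = 0 in P²(F_p) to the left ideal H̄·(xi + yj + zk) is a bijection between points of C_p and the two-dimensional left ideals of the quaternion algebra H̄ over F_p. -/

import Mathlib

open Quaternion

section Aux

variable {p : ℕ} [Fact p.Prime]

private lemma quat_ne_zero {x y z : ZMod p} (h : ¬(x = 0 ∧ y = 0 ∧ z = 0)) :
    (⟨0, x, y, z⟩ : ℍ[ZMod p]) ≠ 0 := by
  intro h0
  exact h ⟨congrArg QuaternionAlgebra.imI h0, congrArg QuaternionAlgebra.imJ h0,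
    congrArg QuaternionAlgebra.imK h0⟩

private lemma quat_sq_zero {x y z : ZMod p} (hc : x ^ 2 + y ^ 2 + z ^ 2 = 0) :
    (⟨0, x, y, z⟩ : ℍ[ZMod p]) * ⟨0, x, y, z⟩ = 0 := by
  ext <;> simp [Quaternion.re_mul, Quaternion.imI_mul, Quaternion.imJ_mul, Quaternion.imK_mul] <;>
    first | ring1 | linear_combination -hc

private lemma rank_two (x y z : ZMod p)
    (hne : ¬(x = 0 ∧ y = 0 ∧ z = 0)) (hc : x ^ 2 + y ^ 2 + z ^ 2 = 0) :
    Module.finrank (ZMod p) (Submodule.restrictScalars (ZMod p)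
      (Ideal.span {(⟨0, x, y, z⟩ : ℍ[ZMod p])})) = 2 := by
  set q : ℍ[ZMod p] := ⟨0, x, y, z⟩ with hqdef
  have hq2 : q * q = 0 := quat_sq_zero hc
  set f : ℍ[ZMod p] →ₗ[ZMod p] ℍ[ZMod p] := LinearMap.mulRight (ZMod p) q with hf
  have hrs : Submodule.restrictScalars (ZMod p) (Ideal.span {q}) = LinearMap.range f := by
    ext r
    simp only [Submodule.restrictScalars_mem, LinearMap.mem_range, hf,
      LinearMap.mulRight_apply]
    exact Ideal.mem_span_singleton'
  show Module.finrank (ZMod p) (Submodule.restrictScalars (ZMod p) (Ideal.span {q})) = 2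
  rw [hrs]
  -- rank-nullity
  have hrn : Module.finrank (ZMod p) (LinearMap.range f)
      + Module.finrank (ZMod p) (LinearMap.ker f) = 4 := by
    rw [LinearMap.finrank_range_add_finrank_ker f, Quaternion.finrank_eq_four]
  have hle : LinearMap.range f ≤ LinearMap.ker f := by
    rintro r ⟨a, rfl⟩
    simp only [LinearMap.mem_ker, hf, LinearMap.mulRight_apply]
    rw [mul_assoc, hq2, mul_zero]
  have hmono : Module.finrank (ZMod p) (LinearMap.range f)
      ≤ Module.finrank (ZMod p) (LinearMap.ker f) := Submodule.finrank_mono hle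
  -- lower bound: two independent elements of the range
  have hqmem : q ∈ LinearMap.range f := ⟨1, by simp [hf]⟩
  have key : ∃ u ∈ LinearMap.range f, LinearIndependent (ZMod p) ![q, u] := by
    rcases not_and_or.mp hne with hx | hyz
    · refine ⟨⟨-x, 0, -z, y⟩, ⟨⟨0, 1, 0, 0⟩, ?_⟩, ?_⟩
      · show (⟨0, 1, 0, 0⟩ : ℍ[ZMod p,-1,-1]) * (⟨0, x, y, z⟩ : ℍ[ZMod p,-1,-1]) = ⟨-x, 0, -z, y⟩
        ext <;> simp [Quaternion.re_mul, Quaternion.imI_mul, Quaternion.imJ_mul,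
          Quaternion.imK_mul]
      · refine LinearIndependent.pair_iff.mpr ?_
        intro s t hst
        change s • (⟨0, x, y, z⟩ : ℍ[ZMod p,-1,-1]) + t • (⟨-x, 0, -z, y⟩ : ℍ[ZMod p,-1,-1]) = 0 at hst
        have h1 : -(t * x) = 0 := by simpa using congrArg QuaternionAlgebra.re hst
        have h2 : s * x = 0 := by simpa using congrArg QuaternionAlgebra.imI hst
        have ht : t = 0 := by
          rcases mul_eq_zero.mp (neg_eq_zero.mp h1) with h | h
          exacts [h, absurd h hx]
        have hs : s = 0 := by
          rcases mul_eq_zero.mp h2 with h | h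
          exacts [h, absurd h hx]
        exact ⟨hs, ht⟩
    rcases not_and_or.mp hyz with hy | hz
    · refine ⟨⟨-y, z, 0, -x⟩, ⟨⟨0, 0, 1, 0⟩, ?_⟩, ?_⟩
      · show (⟨0, 0, 1, 0⟩ : ℍ[ZMod p,-1,-1]) * (⟨0, x, y, z⟩ : ℍ[ZMod p,-1,-1]) = ⟨-y, z, 0, -x⟩
        ext <;> simp [Quaternion.re_mul, Quaternion.imI_mul, Quaternion.imJ_mul,
          Quaternion.imK_mul]
      · refine LinearIndependent.pair_iff.mpr ?_
        intro s t hst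
        change s • (⟨0, x, y, z⟩ : ℍ[ZMod p,-1,-1]) + t • (⟨-y, z, 0, -x⟩ : ℍ[ZMod p,-1,-1]) = 0 at hst
        have h1 : -(t * y) = 0 := by simpa using congrArg QuaternionAlgebra.re hst
        have h2 : s * y = 0 := by simpa using congrArg QuaternionAlgebra.imJ hst
        have ht : t = 0 := by
          rcases mul_eq_zero.mp (neg_eq_zero.mp h1) with h | h
          exacts [h, absurd h hy]
        have hs : s = 0 := by
          rcases mul_eq_zero.mp h2 with h | h
          exacts [h, absurd h hy]
        exact ⟨hs, ht⟩
    · refine ⟨⟨-z, -y, x, 0⟩, ⟨⟨0, 0, 0, 1⟩, ?_⟩, ?_⟩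
      · show (⟨0, 0, 0, 1⟩ : ℍ[ZMod p,-1,-1]) * (⟨0, x, y, z⟩ : ℍ[ZMod p,-1,-1]) = ⟨-z, -y, x, 0⟩
        ext <;> simp [Quaternion.re_mul, Quaternion.imI_mul, Quaternion.imJ_mul,
          Quaternion.imK_mul]
      · refine LinearIndependent.pair_iff.mpr ?_
        intro s t hst
        change s • (⟨0, x, y, z⟩ : ℍ[ZMod p,-1,-1]) + t • (⟨-z, -y, x, 0⟩ : ℍ[ZMod p,-1,-1]) = 0 at hst
        have h1 : -(t * z) = 0 := by simpa using congrArg QuaternionAlgebra.re hst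
        have h2 : s * z = 0 := by simpa using congrArg QuaternionAlgebra.imK hst
        have ht : t = 0 := by
          rcases mul_eq_zero.mp (neg_eq_zero.mp h1) with h | h
          exacts [h, absurd h hz]
        have hs : s = 0 := by
          rcases mul_eq_zero.mp h2 with h | h
          exacts [h, absurd h hz]
        exact ⟨hs, ht⟩
  obtain ⟨u, humem, hli⟩ := key
  have h2le : 2 ≤ Module.finrank (ZMod p) (LinearMap.range f) := by
    have hsp : Submodule.span (ZMod p) (Set.range ![q, u]) ≤ LinearMap.range f := by
      rw [Submodule.span_le]
      rintro r ⟨i, rfl⟩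
      fin_cases i
      exacts [hqmem, humem]
    have := finrank_span_eq_card hli
    simp only [Fintype.card_fin] at this
    calc (2 : ℕ) = Module.finrank (ZMod p) (Submodule.span (ZMod p) (Set.range ![q, u])) :=
          this.symm
      _ ≤ Module.finrank (ZMod p) (LinearMap.range f) := Submodule.finrank_mono hsp
  have hfin : Module.finrank (ZMod p) (LinearMap.range f) = 2 := by omega
  exact hfin

private lemma span_unit_smul (c : (ZMod p)ˣ) (q : ℍ[ZMod p]) :
    Ideal.span {(c : ZMod p) • q} = Ideal.span {q} := by
  apply le_antisymm <;> rw [Ideal.span_le, Set.singleton_subset_iff, SetLike.mem_coe]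
  · rw [Algebra.smul_def]
    exact Ideal.mul_mem_left _ _ (Ideal.mem_span_singleton_self q)
  · have h : (algebraMap (ZMod p) ℍ[ZMod p] ((c⁻¹ : (ZMod p)ˣ) : ZMod p))
        * ((c : ZMod p) • q) = q := by
      rw [← Algebra.smul_def, smul_smul, Units.inv_mul, one_smul]
    have hm := Ideal.mul_mem_left (Ideal.span {(c : ZMod p) • q})
      (algebraMap (ZMod p) ℍ[ZMod p] ((c⁻¹ : (ZMod p)ˣ) : ZMod p))
      (Ideal.mem_span_singleton_self ((c : ZMod p) • q))
    rwa [h] at hm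

private lemma cross_vanish {x y z x' y' z' : ZMod p} (hc : x ^ 2 + y ^ 2 + z ^ 2 = 0)
    (h : (⟨0, x', y', z'⟩ : ℍ[ZMod p]) ∈ Ideal.span {(⟨0, x, y, z⟩ : ℍ[ZMod p])}) :
    y' * z - z' * y = 0 ∧ z' * x - x' * z = 0 ∧ x' * y - y' * x = 0 := by
  obtain ⟨a, ha⟩ := Ideal.mem_span_singleton'.mp h
  have h0 := congrArg QuaternionAlgebra.re ha
  have h1 := congrArg QuaternionAlgebra.imI ha
  have h2 := congrArg QuaternionAlgebra.imJ ha
  have h3 := congrArg QuaternionAlgebra.imK ha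
  simp [QuaternionAlgebra.re_mul, QuaternionAlgebra.imI_mul, QuaternionAlgebra.imJ_mul,
    QuaternionAlgebra.imK_mul] at h0 h1 h2 h3
  refine ⟨?_, ?_, ?_⟩
  · linear_combination -z * h2 + y * h3 - x * h0 - a.imI * hc
  · linear_combination -x * h3 + z * h1 - y * h0 - a.imJ * hc
  · linear_combination -y * h1 + x * h2 - z * h0 - a.imK * hc

private lemma prop_of_cross {v w : Fin 3 → ZMod p} (hv : v ≠ 0) (hw : w ≠ 0)
    (e1 : w 1 * v 2 - w 2 * v 1 = 0) (e2 : w 2 * v 0 - w 0 * v 2 = 0)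
    (e3 : w 0 * v 1 - w 1 * v 0 = 0) :
    ∃ c : (ZMod p)ˣ, w = (c : ZMod p) • v := by
  have hvne : v 0 ≠ 0 ∨ v 1 ≠ 0 ∨ v 2 ≠ 0 := by
    by_contra h
    push_neg at h
    exact hv (funext fun i => by fin_cases i <;> simp [h.1, h.2.1, h.2.2])
  rcases hvne with h0 | h1 | h2
  · have hw0 : w 0 ≠ 0 := by
      intro h
      apply hw; funext j; fin_cases j
      · exact h
      · have : w 1 * v 0 = 0 := by linear_combination -e3 + v 1 * h
        simpa [h0] using mul_eq_zero.mp this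
      · have : w 2 * v 0 = 0 := by linear_combination e2 + v 2 * h
        simpa [h0] using mul_eq_zero.mp this
    have k0 : w 0 = w 0 * (v 0)⁻¹ * v 0 := by field_simp
    have k1 : w 1 = w 0 * (v 0)⁻¹ * v 1 := by
      field_simp
      linear_combination -e3
    have k2 : w 2 = w 0 * (v 0)⁻¹ * v 2 := by
      field_simp
      linear_combination e2
    refine ⟨Units.mk0 (w 0 * (v 0)⁻¹) (mul_ne_zero hw0 (inv_ne_zero h0)), funext fun j => ?_⟩
    fin_cases j <;> simp only [Pi.smul_apply, smul_eq_mul, Units.val_mk0]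
    exacts [k0, k1, k2]
  · have hw1 : w 1 ≠ 0 := by
      intro h
      apply hw; funext j; fin_cases j
      · have : w 0 * v 1 = 0 := by linear_combination e3 + v 0 * h
        simpa [h1] using mul_eq_zero.mp this
      · exact h
      · have : w 2 * v 1 = 0 := by linear_combination -e1 + v 2 * h
        simpa [h1] using mul_eq_zero.mp this
    have k0 : w 0 = w 1 * (v 1)⁻¹ * v 0 := by
      field_simp
      linear_combination e3
    have k1 : w 1 = w 1 * (v 1)⁻¹ * v 1 := by field_simp
    have k2 : w 2 = w 1 * (v 1)⁻¹ * v 2 := by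
      field_simp
      linear_combination -e1
    refine ⟨Units.mk0 (w 1 * (v 1)⁻¹) (mul_ne_zero hw1 (inv_ne_zero h1)), funext fun j => ?_⟩
    fin_cases j <;> simp only [Pi.smul_apply, smul_eq_mul, Units.val_mk0]
    exacts [k0, k1, k2]
  · have hw2 : w 2 ≠ 0 := by
      intro h
      apply hw; funext j; fin_cases j
      · have : w 0 * v 2 = 0 := by linear_combination -e2 + v 0 * h
        simpa [h2] using mul_eq_zero.mp this
      · have : w 1 * v 2 = 0 := by linear_combination e1 + v 1 * h
        simpa [h2] using mul_eq_zero.mp this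
      · exact h
    have k0 : w 0 = w 2 * (v 2)⁻¹ * v 0 := by
      field_simp
      linear_combination -e2
    have k1 : w 1 = w 2 * (v 2)⁻¹ * v 1 := by
      field_simp
      linear_combination e1
    have k2 : w 2 = w 2 * (v 2)⁻¹ * v 2 := by field_simp
    refine ⟨Units.mk0 (w 2 * (v 2)⁻¹) (mul_ne_zero hw2 (inv_ne_zero h2)), funext fun j => ?_⟩
    fin_cases j <;> simp only [Pi.smul_apply, smul_eq_mul, Units.val_mk0]
    exacts [k0, k1, k2]

private lemma exists_conic_gen (J : Ideal ℍ[ZMod p])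
    (hJ : Module.finrank (ZMod p) (Submodule.restrictScalars (ZMod p) J) = 2) :
    ∃ x y z : ZMod p, ¬(x = 0 ∧ y = 0 ∧ z = 0) ∧ x ^ 2 + y ^ 2 + z ^ 2 = 0 ∧
      Ideal.span {(⟨0, x, y, z⟩ : ℍ[ZMod p])} = J := by
  set g : ℍ[ZMod p] →ₗ[ZMod p] ZMod p :=
    { toFun := fun q => q.re, map_add' := fun _ _ => rfl, map_smul' := fun _ _ => rfl } with hg
  have hker3 : Module.finrank (ZMod p) (LinearMap.ker g) = 3 := by
    have h1 := LinearMap.finrank_range_add_finrank_ker g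
    have hsurj : LinearMap.range g = ⊤ :=
      LinearMap.range_eq_top.mpr fun r => ⟨(⟨r, 0, 0, 0⟩ : ℍ[ZMod p]), rfl⟩
    rw [hsurj, finrank_top, Module.finrank_self, Quaternion.finrank_eq_four] at h1
    omega
  set J' := Submodule.restrictScalars (ZMod p) J with hJ'def
  have hsum := Submodule.finrank_sup_add_finrank_inf_eq J' (LinearMap.ker g)
  have hle4 : Module.finrank (ZMod p) ↥(J' ⊔ LinearMap.ker g) ≤ 4 := by
    have h := Submodule.finrank_le (J' ⊔ LinearMap.ker g)
    rwa [Quaternion.finrank_eq_four] at h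
  have hinf : 1 ≤ Module.finrank (ZMod p) ↥(J' ⊓ LinearMap.ker g) := by omega
  obtain ⟨q, hqmem, hq0⟩ : ∃ q ∈ J' ⊓ LinearMap.ker g, q ≠ 0 := by
    rw [← Submodule.ne_bot_iff]
    intro hbot
    rw [hbot, finrank_bot] at hinf
    omega
  have hqJ : q ∈ J := hqmem.1
  have hqre : q.re = 0 := hqmem.2
  have hN : Quaternion.normSq q = 0 := by
    by_contra hN
    have h1J : (1 : ℍ[ZMod p]) ∈ J := by
      have hstar : (((Quaternion.normSq q)⁻¹ • star q) * q : ℍ[ZMod p]) = 1 := by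
        rw [smul_mul_assoc, Quaternion.star_mul_self, Quaternion.smul_coe,
          inv_mul_cancel₀ hN, Quaternion.coe_one]
      rw [← hstar]
      exact Ideal.mul_mem_left _ _ hqJ
    have hT : J = ⊤ := (Ideal.eq_top_iff_one J).mpr h1J
    have h4 : Module.finrank (ZMod p) J' = 4 := by
      rw [hJ'def, hT, Submodule.restrictScalars_top, finrank_top,
        Quaternion.finrank_eq_four]
    omega
  have hconic : q.imI ^ 2 + q.imJ ^ 2 + q.imK ^ 2 = 0 := by
    have h := Quaternion.normSq_def' q
    rw [hN, hqre] at h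
    linear_combination -h
  have hne : ¬(q.imI = 0 ∧ q.imJ = 0 ∧ q.imK = 0) := by
    rintro ⟨h1, h2, h3⟩
    exact hq0 (by ext <;> simp [hqre, h1, h2, h3])
  have hqeq : (⟨0, q.imI, q.imJ, q.imK⟩ : ℍ[ZMod p]) = q := by
    ext <;> simp [hqre]
  refine ⟨q.imI, q.imJ, q.imK, hne, hconic, ?_⟩
  rw [hqeq]
  have hle : Ideal.span {q} ≤ J :=
    (Ideal.span_le).mpr (Set.singleton_subset_iff.mpr hqJ)
  have hrank := rank_two q.imI q.imJ q.imK hne hconic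
  rw [hqeq] at hrank
  apply Submodule.restrictScalars_injective (ZMod p) _ _
  refine Submodule.eq_of_le_of_finrank_eq (fun x hx => hle hx) ?_
  rw [hrank]
  exact hJ.symm

end Aux

open Quaternion in
/-- The map `(x:y:z) ↦ H̄·(xi + yj + zk)` is a bijection between the points of
the projective conic `x² + y² + z² = 0` and the two-dimensional left ideals of
the quaternion algebra `(-1,-1)` over `𝔽_p`: it sends every conic point to a
two-dimensional left ideal, two points give the same ideal iff they are
proportional, and every two-dimensional left ideal arises this way. -/
theorem conic_bijects_with_ideals (p : ℕ) [Fact p.Prime] (hp : Odd p) :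
    (∀ v : Fin 3 → ZMod p, v ≠ 0 → v 0 ^ 2 + v 1 ^ 2 + v 2 ^ 2 = 0 →
      Module.finrank (ZMod p) (Submodule.restrictScalars (ZMod p)
        (Ideal.span {(⟨0, v 0, v 1, v 2⟩ : ℍ[ZMod p])})) = 2) ∧
    (∀ v w : Fin 3 → ZMod p, v ≠ 0 → v 0 ^ 2 + v 1 ^ 2 + v 2 ^ 2 = 0 →
      w ≠ 0 → w 0 ^ 2 + w 1 ^ 2 + w 2 ^ 2 = 0 →
      ((Ideal.span {(⟨0, v 0, v 1, v 2⟩ : ℍ[ZMod p])} : Ideal ℍ[ZMod p])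
          = Ideal.span {(⟨0, w 0, w 1, w 2⟩ : ℍ[ZMod p])}
        ↔ ∃ c : (ZMod p)ˣ, w = (c : ZMod p) • v)) ∧
    (∀ J : Ideal ℍ[ZMod p],
      Module.finrank (ZMod p) (Submodule.restrictScalars (ZMod p) J) = 2 →
      ∃ v : Fin 3 → ZMod p, v ≠ 0 ∧ v 0 ^ 2 + v 1 ^ 2 + v 2 ^ 2 = 0 ∧
        Ideal.span {(⟨0, v 0, v 1, v 2⟩ : ℍ[ZMod p])} = J) := by
  refine ⟨?_, ?_, ?_⟩
  · intro v hv hc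
    exact rank_two _ _ _
      (fun h => hv (funext fun i => by fin_cases i <;> simp [h.1, h.2.1, h.2.2])) hc
  · intro v w hv hcv hw hcw
    constructor
    · intro hspan
      have hmem : (⟨0, w 0, w 1, w 2⟩ : ℍ[ZMod p])
          ∈ Ideal.span {(⟨0, v 0, v 1, v 2⟩ : ℍ[ZMod p])} := by
        exact (le_of_eq hspan.symm) (Ideal.mem_span_singleton_self _)
      obtain ⟨e1, e2, e3⟩ := cross_vanish hcv hmem
      exact prop_of_cross hv hw e1 e2 e3
    · rintro ⟨c, rfl⟩
      have hmk : (⟨0, ((c : ZMod p) • v) 0, ((c : ZMod p) • v) 1, ((c : ZMod p) • v) 2⟩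
            : ℍ[ZMod p]) = (c : ZMod p) • (⟨0, v 0, v 1, v 2⟩ : ℍ[ZMod p]) := by
        ext <;> simp
      rw [hmk]; exact (span_unit_smul c _).symm
  · intro J hJ
    obtain ⟨x, y, z, hne, hc, hspan⟩ := exists_conic_gen J hJ
    refine ⟨![x, y, z], ?_, ?_, ?_⟩
    · intro h
      refine hne ⟨?_, ?_, ?_⟩
      · simpa using congrFun h 0
      · simpa using congrFun h 1
      · simpa using congrFun h 2
    · simpa using hc
    · have hmk : (⟨0, ![x, y, z] 0, ![x, y, z] 1, ![x, y, z] 2⟩ : ℍ[ZMod p])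
          = ⟨0, x, y, z⟩ := by ext <;> simp
      rw [hmk]
      exact hspan
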